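/- Uniqueness of the Shapley value: any value assignment ψ satisfying Efficiency, Symmetry, Null Contribution, and Linearity (including homogeneity, i.e., ℝ-linearity in V) coincides with the Shapley value φ on all games V with V(∅) = 0. -/

import Mathlib

open Finset

/-- Shapley value of player `i` in the game `V` over player set `M`. -/
noncomputable def phi {α : Type*} [DecidableEq α] (M : Finset α) (V : Finset α → ℝ) (i : α) : ℝ :=
  ∑ S ∈ (M.erase i).powerset,
    ((Nat.factorial S.card : ℝ) * (Nat.factorial (M.card - S.card - 1) : ℝ)
        / (Nat.factorial M.card : ℝ)) * (V (insert i S) - V S)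

set_option linter.unusedSectionVars false

/-- The Shapley weight. -/
noncomputable def shw (m s : ℕ) : ℝ :=
  (Nat.factorial s : ℝ) * (Nat.factorial (m - s - 1) : ℝ) / (Nat.factorial m : ℝ)

lemma phi_eq {α : Type*} [DecidableEq α] (M : Finset α) (V : Finset α → ℝ) (i : α) :
    phi M V i = ∑ S ∈ (M.erase i).powerset, shw M.card S.card * (V (insert i S) - V S) := rfl

/-- Unanimity game on coalition `T`. -/
def uGame {α : Type*} [DecidableEq α] (T : Finset α) : Finset α → ℝ :=
  fun S => if T ⊆ S then 1 else 0

lemma uGame_empty {α : Type*} [DecidableEq α] {T : Finset α} (hT : T.Nonempty) :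
    uGame T ∅ = 0 := by
  simp [uGame, Finset.subset_empty, hT.ne_empty]

/-- Möbius coefficient of a game. -/
noncomputable def coef {α : Type*} [DecidableEq α] (V : Finset α → ℝ) (T : Finset α) : ℝ :=
  ∑ A ∈ T.powerset, (-1 : ℝ) ^ (T.card - A.card) * V A

lemma coef_empty {α : Type*} [DecidableEq α] {V : Finset α → ℝ} (hV : V ∅ = 0) :
    coef V ∅ = 0 := by
  simp [coef, hV]

lemma neg_one_pow_sum {α : Type*} [DecidableEq α] (s : Finset α) :
    ∑ B ∈ s.powerset, (-1 : ℝ) ^ B.card = if s = ∅ then 1 else 0 := by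
  have := @Finset.sum_powerset_neg_one_pow_card α _ s
  have h2 : ((∑ m ∈ s.powerset, (-1 : ℤ) ^ m.card : ℤ) : ℝ)
      = ∑ B ∈ s.powerset, (-1 : ℝ) ^ B.card := by push_cast; rfl
  rw [← h2, this]
  split <;> simp

lemma moebius {α : Type*} [DecidableEq α] (V : Finset α → ℝ) (S : Finset α) :
    ∑ T ∈ S.powerset, coef V T = V S := by
  unfold coef
  rw [Finset.sum_comm' (s := S.powerset) (t := fun T => T.powerset)
    (t' := S.powerset) (s' := fun A => S.powerset.filter (A ⊆ ·))
    (fun T A => by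
      simp only [mem_powerset, mem_filter]
      constructor
      · rintro ⟨h1, h2⟩; exact ⟨⟨h1, h2⟩, h2.trans h1⟩
      · rintro ⟨⟨h1, h2⟩, _⟩; exact ⟨h1, h2⟩)]
  have key : ∀ A ∈ S.powerset,
      (∑ T ∈ S.powerset.filter (A ⊆ ·), (-1:ℝ) ^ (T.card - A.card) * V A)
        = if A = S then V A else 0 := by
    intro A hA
    rw [mem_powerset] at hA
    have : ∑ T ∈ S.powerset.filter (A ⊆ ·), (-1:ℝ) ^ (T.card - A.card) * V A
        = ∑ B ∈ (S \ A).powerset, (-1:ℝ) ^ B.card * V A := by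
      refine Finset.sum_nbij' (fun T => T \ A) (fun B => A ∪ B) ?_ ?_ ?_ ?_ ?_
      · intro T hT
        simp only [mem_filter, mem_powerset] at hT ⊢
        exact sdiff_subset_sdiff hT.1 le_rfl
      · intro B hB
        simp only [mem_powerset, mem_filter] at hB ⊢
        exact ⟨union_subset hA (hB.trans (sdiff_subset)), subset_union_left⟩
      · intro T hT
        simp only [mem_filter, mem_powerset] at hT
        exact union_sdiff_of_subset hT.2
      · intro B hB
        simp only [mem_powerset] at hB
        exact union_sdiff_cancel_left (disjoint_sdiff.mono_right hB)
      · intro T hT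
        simp only [mem_filter, mem_powerset] at hT
        rw [card_sdiff_of_subset hT.2]
    rw [this, ← Finset.sum_mul, neg_one_pow_sum]
    by_cases h : A = S
    · simp [h]
    · have h2 : S \ A ≠ ∅ := by
        rw [Ne, sdiff_eq_empty_iff_subset]
        exact fun hc => h (subset_antisymm hA hc)
      simp [h, h2]
  rw [Finset.sum_congr rfl key, Finset.sum_ite_eq' S.powerset S V]
  simp

lemma decomp {α : Type*} [DecidableEq α] {M : Finset α} (V : Finset α → ℝ) (hV : V ∅ = 0)
    {S : Finset α} (hS : S ⊆ M) :
    ∑ T ∈ M.powerset.filter Finset.Nonempty, coef V T * uGame T S = V S := by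
  have h1 : ∑ T ∈ M.powerset.filter Finset.Nonempty, coef V T * uGame T S
      = ∑ T ∈ S.powerset.filter Finset.Nonempty, coef V T := by
    rw [Finset.sum_filter, Finset.sum_filter]
    rw [← Finset.sum_subset (Finset.powerset_mono.2 hS)]
    · refine Finset.sum_congr rfl fun T hT => ?_
      rw [mem_powerset] at hT
      by_cases hne : T.Nonempty <;> simp [uGame, hne, hT]
    · intro T hT hTS
      rw [mem_powerset] at hT hTS
      by_cases hne : T.Nonempty <;> simp [uGame, hne, hTS]
  rw [h1]
  have h2 := moebius V S
  rw [← Finset.sum_filter_add_sum_filter_not S.powerset Finset.Nonempty] at h2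
  have h3 : ∑ T ∈ S.powerset.filter (fun T => ¬ T.Nonempty), coef V T = 0 := by
    refine Finset.sum_eq_zero fun T hT => ?_
    simp only [mem_filter, Finset.not_nonempty_iff_eq_empty] at hT
    rw [hT.2, coef_empty hV]
  rw [h3, add_zero] at h2
  exact h2

lemma phi_null {α : Type*} [DecidableEq α] (M : Finset α) :
    ∀ V : Finset α → ℝ, V ∅ = 0 → ∀ i ∈ M,
      (∀ S ⊆ M.erase i, V (insert i S) = V S) → phi M V i = 0 := by
  intro V _ i _ h
  rw [phi_eq]
  refine Finset.sum_eq_zero fun S hS => ?_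
  rw [h S (mem_powerset.1 hS)]
  ring

lemma phi_lin {α : Type*} [DecidableEq α] (M : Finset α) :
    ∀ (c : ℝ) (V W : Finset α → ℝ), V ∅ = 0 → W ∅ = 0 → ∀ i ∈ M,
      phi M (fun S => c * V S + W S) i = c * phi M V i + phi M W i := by
  intro c V W _ _ i _
  simp only [phi_eq, Finset.mul_sum, ← Finset.sum_add_distrib]
  exact Finset.sum_congr rfl fun S _ => by ring

lemma phi_sym {α : Type*} [DecidableEq α] (M : Finset α) :
    ∀ V : Finset α → ℝ, V ∅ = 0 → ∀ i ∈ M, ∀ j ∈ M,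
      (∀ S ⊆ (M.erase i).erase j, V (insert i S) = V (insert j S)) → phi M V i = phi M V j := by
  intro V _ i hi j hj h
  rw [phi_eq, phi_eq]
  rcases eq_or_ne i j with rfl | hne
  · rfl
  set E := (M.erase i).erase j with hE
  have hjE : j ∉ E := notMem_erase _ _
  have hiE : i ∉ E := by rw [hE]; exact fun hc => (notMem_erase i M) (mem_of_mem_erase hc)
  have hEi : M.erase i = insert j E := by
    rw [hE, insert_erase (mem_erase.2 ⟨hne.symm, hj⟩)]
  have hEj : M.erase j = insert i ((M.erase j).erase i) := by
    rw [insert_erase (mem_erase.2 ⟨hne, hi⟩)]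
  have hEE : (M.erase j).erase i = E := by rw [hE, erase_right_comm]
  rw [hEi, hEj, hEE, Finset.sum_powerset_insert hjE, Finset.sum_powerset_insert hiE]
  congr 1
  · refine Finset.sum_congr rfl fun S hS => ?_
    rw [mem_powerset] at hS
    rw [h S hS]
  · refine Finset.sum_congr rfl fun S hS => ?_
    rw [mem_powerset] at hS
    have hiS : i ∉ S := fun hc => hiE (hS hc)
    have hjS : j ∉ S := fun hc => hjE (hS hc)
    rw [card_insert_of_notMem hjS, card_insert_of_notMem hiS,
      Finset.insert_comm, h S hS]

lemma phi_alt {α : Type*} [DecidableEq α] (M : Finset α) (V : Finset α → ℝ)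
    (i : α) (hi : i ∈ M) :
    ∑ S ∈ (M.erase i).powerset, shw M.card S.card * (V (insert i S) - V S)
      = ∑ T ∈ M.powerset,
          (if i ∈ T then shw M.card (T.card - 1) else -(shw M.card T.card)) * V T := by
  have split : ∀ S : Finset α, shw M.card S.card * (V (insert i S) - V S)
      = shw M.card S.card * V (insert i S) - shw M.card S.card * V S := fun S => by ring
  simp only [split]
  rw [Finset.sum_sub_distrib]
  rw [← Finset.sum_filter_add_sum_filter_not M.powerset (fun T => i ∈ T)]
  have h1 : ∑ S ∈ (M.erase i).powerset, shw M.card S.card * V (insert i S)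
      = ∑ T ∈ M.powerset.filter (fun T => i ∈ T),
          (if i ∈ T then shw M.card (T.card - 1) else -(shw M.card T.card)) * V T := by
    refine Finset.sum_nbij' (fun S => insert i S) (fun T => T.erase i) ?_ ?_ ?_ ?_ ?_
    · intro S hS
      rw [mem_powerset, subset_erase] at hS
      simp only [mem_filter, mem_powerset]
      exact ⟨insert_subset hi hS.1, mem_insert_self i S⟩
    · intro T hT
      simp only [mem_filter, mem_powerset] at hT
      rw [mem_powerset]
      exact erase_subset_erase i hT.1
    · intro S hS
      rw [mem_powerset, subset_erase] at hS
      exact erase_insert hS.2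
    · intro T hT
      simp only [mem_filter, mem_powerset] at hT
      exact insert_erase hT.2
    · intro S hS
      rw [mem_powerset, subset_erase] at hS
      rw [if_pos (mem_insert_self i S), card_insert_of_notMem hS.2, Nat.add_sub_cancel]
  have h2 : ∑ S ∈ (M.erase i).powerset, shw M.card S.card * V S
      = -∑ T ∈ M.powerset.filter (fun T => i ∉ T),
          (if i ∈ T then shw M.card (T.card - 1) else -(shw M.card T.card)) * V T := by
    have hset : (M.erase i).powerset = M.powerset.filter (fun T => i ∉ T) := by
      ext T; simp [subset_erase, and_comm]
    rw [hset, ← Finset.sum_neg_distrib]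
    refine Finset.sum_congr rfl fun T hT => ?_
    simp only [mem_filter] at hT
    rw [if_neg hT.2]
    ring
  rw [h1, h2]
  ring

lemma coeff_sum {α : Type*} [DecidableEq α] (M T : Finset α) (hT : T ⊆ M) (a b : ℝ) :
    ∑ i ∈ M, (if i ∈ T then a else b)
      = (T.card : ℝ) * a + ((M.card - T.card : ℕ) : ℝ) * b := by
  rw [← Finset.sum_filter_add_sum_filter_not M (fun i => i ∈ T)]
  have h1 : M.filter (fun i => i ∈ T) = T := by
    rw [Finset.filter_mem_eq_inter, inter_eq_right.2 hT]
  have h2 : M.filter (fun i => i ∉ T) = M \ T := (Finset.sdiff_eq_filter M T).symm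
  rw [h1, h2]
  rw [Finset.sum_congr rfl (fun i hi => if_pos (by exact hi)),
    Finset.sum_congr rfl (fun i (hi : i ∈ M \ T) => if_neg (mem_sdiff.1 hi).2)]
  simp [card_sdiff_of_subset hT, nsmul_eq_mul]

lemma g_mid (m t : ℕ) (ht : 0 < t) (htm : t < m) :
    (t : ℝ) * shw m (t - 1) + ((m - t : ℕ) : ℝ) * (-(shw m t)) = 0 := by
  have hnat : m - (t - 1) - 1 = m - t := by omega
  have hm : (Nat.factorial m : ℝ) ≠ 0 := by positivity
  have e1 : (t : ℝ) * ((t - 1).factorial : ℝ) = (t.factorial : ℝ) := by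
    exact_mod_cast Nat.mul_factorial_pred ht.ne'
  have e2 : ((m - t : ℕ) : ℝ) * ((m - t - 1).factorial : ℝ) = ((m - t).factorial : ℝ) := by
    exact_mod_cast Nat.mul_factorial_pred (by omega)
  simp only [shw, hnat]
  field_simp
  linear_combination ((m - t).factorial : ℝ) * e1 - (t.factorial : ℝ) * e2

lemma g_top (m : ℕ) (hm : 0 < m) :
    (m : ℝ) * shw m (m - 1) + ((m - m : ℕ) : ℝ) * (-(shw m m)) = 1 := by
  have hnat : m - (m - 1) - 1 = 0 := by omega
  have hfm : (Nat.factorial m : ℝ) ≠ 0 := by positivity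
  have e1 : (m : ℝ) * ((m - 1).factorial : ℝ) = (m.factorial : ℝ) := by
    exact_mod_cast Nat.mul_factorial_pred hm.ne'
  simp only [shw, hnat, Nat.sub_self, Nat.factorial_zero, Nat.cast_zero, Nat.cast_one]
  field_simp
  linear_combination e1

lemma phi_eff {α : Type*} [DecidableEq α] (M : Finset α) (hM : M.Nonempty) :
    ∀ V : Finset α → ℝ, V ∅ = 0 → ∑ i ∈ M, phi M V i = V M := by
  intro V hV
  simp only [phi_eq]
  rw [Finset.sum_congr rfl (fun i hi => phi_alt M V i hi), Finset.sum_comm]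
  have key : ∀ T ∈ M.powerset,
      (∑ i ∈ M, (if i ∈ T then shw M.card (T.card - 1) else -(shw M.card T.card)) * V T)
        = ((if T = M then (1:ℝ) else 0)) * V T := by
    intro T hT
    rw [mem_powerset] at hT
    rw [← Finset.sum_mul, coeff_sum M T hT]
    by_cases hTM : T = M
    · subst hTM
      rw [g_top T.card (card_pos.2 hM), if_pos rfl]
    · rw [if_neg hTM]
      rcases eq_or_ne T ∅ with rfl | hTne
      · simp [hV]
      · have ht : 0 < T.card := card_pos.2 (nonempty_of_ne_empty hTne)
        have htm : T.card < M.card := card_lt_card (ssubset_of_subset_of_ne hT hTM)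
        rw [g_mid M.card T.card ht htm]
  rw [Finset.sum_congr rfl key]
  rw [Finset.sum_eq_single_of_mem M (mem_powerset_self M)]
  · simp
  · intro T _ hTM
    simp [hTM]

section
variable {α : Type*} [DecidableEq α] (M : Finset α)
  (ψ : (Finset α → ℝ) → α → ℝ)

/-- Value of any assignment satisfying Eff + Sym + Null on unanimity games. -/
lemma chi_u
    (hEff : ∀ V : Finset α → ℝ, V ∅ = 0 → ∑ i ∈ M, ψ V i = V M)
    (hSym : ∀ V : Finset α → ℝ, V ∅ = 0 → ∀ i ∈ M, ∀ j ∈ M,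
      (∀ S ⊆ (M.erase i).erase j, V (insert i S) = V (insert j S)) → ψ V i = ψ V j)
    (hNull : ∀ V : Finset α → ℝ, V ∅ = 0 → ∀ i ∈ M,
      (∀ S ⊆ M.erase i, V (insert i S) = V S) → ψ V i = 0)
    (T : Finset α) (hTM : T ⊆ M) (hT : T.Nonempty) :
    ∀ i ∈ M, ψ (uGame T) i = if i ∈ T then 1 / (T.card : ℝ) else 0 := by
  have hu0 : uGame T ∅ = 0 := uGame_empty hT
  have hnull0 : ∀ j ∈ M, j ∉ T → ψ (uGame T) j = 0 := by
    intro j hj hjT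
    refine hNull (uGame T) hu0 j hj fun S _ => ?_
    simp [uGame, Finset.subset_insert_iff_of_notMem hjT]
  intro i hi
  by_cases hiT : i ∈ T
  · rw [if_pos hiT]
    have hsame : ∀ j ∈ T, ψ (uGame T) j = ψ (uGame T) i := by
      intro j hj
      rcases eq_or_ne j i with rfl | hne
      · rfl
      refine hSym (uGame T) hu0 j (hTM hj) i (hTM hiT) fun S hS => ?_
      have hiS : i ∉ S := fun hc => (notMem_erase i _) (hS hc)
      have hjS : j ∉ S := fun hc => (notMem_erase j _) (mem_of_mem_erase (hS hc))
      have h1 : ¬ T ⊆ insert j S := fun hc => by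
        rcases mem_insert.1 (hc hiT) with h | h
        · exact hne h.symm
        · exact hiS h
      have h2 : ¬ T ⊆ insert i S := fun hc => by
        rcases mem_insert.1 (hc hj) with h | h
        · exact hne h
        · exact hjS h
      simp [uGame, h1, h2]
    have hsum : ∑ j ∈ M, ψ (uGame T) j = uGame T M := hEff (uGame T) hu0
    have hTM1 : uGame T M = 1 := by simp [uGame, hTM]
    have hsum2 : ∑ j ∈ T, ψ (uGame T) j = 1 := by
      rw [Finset.sum_subset hTM (fun j hj hjT => hnull0 j hj hjT)] at *
      rw [hsum, hTM1]
    rw [Finset.sum_congr rfl hsame, Finset.sum_const, nsmul_eq_mul] at hsum2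
    have hc : (T.card : ℝ) ≠ 0 := Nat.cast_ne_zero.2 (card_pos.2 hT).ne'
    field_simp at hsum2 ⊢
    linarith [hsum2]
  · rw [if_neg hiT]
    exact hnull0 i hi hiT

lemma psi_zero
    (hLin : ∀ (c : ℝ) (V W : Finset α → ℝ), V ∅ = 0 → W ∅ = 0 → ∀ i ∈ M,
      ψ (fun S => c * V S + W S) i = c * ψ V i + ψ W i)
    (i : α) (hi : i ∈ M) : ψ (fun _ => 0) i = 0 := by
  have h := hLin 1 (fun _ => 0) (fun _ => 0) rfl rfl i hi
  have he : (fun (S : Finset α) => (1:ℝ) * (0:ℝ) + 0) = (fun _ => (0:ℝ)) := by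
    funext S; ring
  rw [he] at h
  linarith

lemma psi_sum
    (hLin : ∀ (c : ℝ) (V W : Finset α → ℝ), V ∅ = 0 → W ∅ = 0 → ∀ i ∈ M,
      ψ (fun S => c * V S + W S) i = c * ψ V i + ψ W i)
    (c : Finset α → ℝ) :
    ∀ (A : Finset (Finset α)), (∀ T ∈ A, T.Nonempty) → ∀ i ∈ M,
      ψ (fun S => ∑ T ∈ A, c T * uGame T S) i = ∑ T ∈ A, c T * ψ (uGame T) i := by
  intro A
  induction A using Finset.induction_on with
  | empty =>
    intro _ i hi
    simpa using psi_zero M ψ hLin i hi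
  | @insert T₀ A hT₀A ih =>
    intro hne i hi
    have hT₀ : T₀.Nonempty := hne T₀ (mem_insert_self _ _)
    have hrest : ∀ T ∈ A, T.Nonempty := fun T hT => hne T (mem_insert_of_mem hT)
    have he : (fun S => ∑ T ∈ insert T₀ A, c T * uGame T S)
        = (fun S => c T₀ * uGame T₀ S + ∑ T ∈ A, c T * uGame T S) := by
      funext S
      rw [Finset.sum_insert hT₀A]
    have hW0 : (∑ T ∈ A, c T * uGame T (∅ : Finset α)) = 0 := by
      refine Finset.sum_eq_zero fun T hT => ?_
      rw [uGame_empty (hrest T hT), mul_zero]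
    rw [he, hLin (c T₀) (uGame T₀) (fun S => ∑ T ∈ A, c T * uGame T S)
        (uGame_empty hT₀) hW0 i hi, ih hrest i hi, Finset.sum_insert hT₀A]

lemma psi_restrict
    (hNull : ∀ V : Finset α → ℝ, V ∅ = 0 → ∀ i ∈ M,
      (∀ S ⊆ M.erase i, V (insert i S) = V S) → ψ V i = 0)
    (hLin : ∀ (c : ℝ) (V W : Finset α → ℝ), V ∅ = 0 → W ∅ = 0 → ∀ i ∈ M,
      ψ (fun S => c * V S + W S) i = c * ψ V i + ψ W i)
    (V W : Finset α → ℝ) (hV : V ∅ = 0) (hW : W ∅ = 0)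
    (hagree : ∀ S ⊆ M, V S = W S) (i : α) (hi : i ∈ M) : ψ V i = ψ W i := by
  have h := hLin (-1) V W hV hW i hi
  have h0 : ψ (fun S => (-1) * V S + W S) i = 0 := by
    refine hNull _ (by rw [hV, hW]; ring) i hi fun S hS => ?_
    have hSM : S ⊆ M := hS.trans (erase_subset i M)
    have hiSM : insert i S ⊆ M := insert_subset hi hSM
    rw [hagree S hSM, hagree (insert i S) hiSM]
    ring
  rw [h0] at h
  linarith

lemma value_eq
    (hEff : ∀ V : Finset α → ℝ, V ∅ = 0 → ∑ i ∈ M, ψ V i = V M)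
    (hSym : ∀ V : Finset α → ℝ, V ∅ = 0 → ∀ i ∈ M, ∀ j ∈ M,
      (∀ S ⊆ (M.erase i).erase j, V (insert i S) = V (insert j S)) → ψ V i = ψ V j)
    (hNull : ∀ V : Finset α → ℝ, V ∅ = 0 → ∀ i ∈ M,
      (∀ S ⊆ M.erase i, V (insert i S) = V S) → ψ V i = 0)
    (hLin : ∀ (c : ℝ) (V W : Finset α → ℝ), V ∅ = 0 → W ∅ = 0 → ∀ i ∈ M,
      ψ (fun S => c * V S + W S) i = c * ψ V i + ψ W i) :
    ∀ V : Finset α → ℝ, V ∅ = 0 → ∀ i ∈ M,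
      ψ V i = ∑ T ∈ M.powerset.filter Finset.Nonempty,
        coef V T * (if i ∈ T then 1 / (T.card : ℝ) else 0) := by
  intro V hV i hi
  set F := M.powerset.filter Finset.Nonempty with hF
  have hFne : ∀ T ∈ F, T.Nonempty := fun T hT => (mem_filter.1 hT).2
  have hFsub : ∀ T ∈ F, T ⊆ M := fun T hT => mem_powerset.1 (mem_filter.1 hT).1
  set W := fun S => ∑ T ∈ F, coef V T * uGame T S with hWdef
  have hW0 : W ∅ = 0 := by
    refine Finset.sum_eq_zero fun T hT => ?_
    rw [uGame_empty (hFne T hT), mul_zero]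
  have step1 : ψ V i = ψ W i := by
    refine psi_restrict M ψ hNull hLin V W hV hW0 (fun S hS => ?_) i hi
    rw [hWdef]
    exact (decomp V hV hS).symm
  rw [step1, psi_sum M ψ hLin (coef V) F hFne i hi]
  refine Finset.sum_congr rfl fun T hT => ?_
  rw [chi_u M ψ hEff hSym hNull T (hFsub T hT) (hFne T hT) i hi]

end

theorem shapley_uniqueness {α : Type*} [DecidableEq α] (M : Finset α) (hM : M.Nonempty)
    (ψ : (Finset α → ℝ) → α → ℝ)
    (hEff : ∀ V : Finset α → ℝ, V ∅ = 0 → ∑ i ∈ M, ψ V i = V M)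
    (hSym : ∀ V : Finset α → ℝ, V ∅ = 0 → ∀ i ∈ M, ∀ j ∈ M,
      (∀ S ⊆ (M.erase i).erase j, V (insert i S) = V (insert j S)) → ψ V i = ψ V j)
    (hNull : ∀ V : Finset α → ℝ, V ∅ = 0 → ∀ i ∈ M,
      (∀ S ⊆ M.erase i, V (insert i S) = V S) → ψ V i = 0)
    (hLin : ∀ (c : ℝ) (V W : Finset α → ℝ), V ∅ = 0 → W ∅ = 0 → ∀ i ∈ M,
      ψ (fun S => c * V S + W S) i = c * ψ V i + ψ W i) :
    ∀ V : Finset α → ℝ, V ∅ = 0 → ∀ i ∈ M, ψ V i = phi M V i := by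
  intro V hV i hi
  rw [value_eq M ψ hEff hSym hNull hLin V hV i hi]
  exact (value_eq M (phi M) (phi_eff M hM) (phi_sym M) (phi_null M) (phi_lin M) V hV i hi).symm
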